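/- For all n ≥ 1 and 0 ≤ k ≤ n-1, there is a bijection between the set P(n+k-1,k) of partial matchings of [n+k-1] with k arcs avoiding 2-right crossings and right nestings, and the set CT(n,k) of partitions of [n] with k arcs avoiding right crossings; in particular |P(n+k-1,k)| = |CT(n,k)|. -/

import Mathlib

open Finset

/-- A partial matching of `[m]`: a set of arcs `(i,j)` with `1 ≤ i < j ≤ m`
such that every vertex belongs to at most one arc. -/
def IsMatching (m : ℕ) (M : Finset (ℕ × ℕ)) : Prop :=
  (∀ p ∈ M, 1 ≤ p.1 ∧ p.1 < p.2 ∧ p.2 ≤ m) ∧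
  ∀ p ∈ M, ∀ q ∈ M, p ≠ q → p.1 ≠ q.1 ∧ p.1 ≠ q.2 ∧ p.2 ≠ q.1 ∧ p.2 ≠ q.2

/-- The linear (arc) diagram of a partition of `[n]`: every vertex is the left
endpoint of at most one arc and the right endpoint of at most one arc. -/
def IsPartitionDiagram (n : ℕ) (P : Finset (ℕ × ℕ)) : Prop :=
  (∀ p ∈ P, 1 ≤ p.1 ∧ p.1 < p.2 ∧ p.2 ≤ n) ∧
  ∀ p ∈ P, ∀ q ∈ P, p ≠ q → p.1 ≠ q.1 ∧ p.2 ≠ q.2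

/-- A 2-right crossing: arcs `(i1,j1)`, `(i2,j2)` with `i1<i2<j1<j2` and `j2-j1 ≤ 2`. -/
def Has2RightCrossing (M : Finset (ℕ × ℕ)) : Prop :=
  ∃ p ∈ M, ∃ q ∈ M, p.1 < q.1 ∧ q.1 < p.2 ∧ p.2 < q.2 ∧ q.2 ≤ p.2 + 2

/-- A right crossing: arcs `(i1,j1)`, `(i2,j2)` with `i1<i2<j1<j2` and `j2 = j1+1`. -/
def HasRightCrossing (M : Finset (ℕ × ℕ)) : Prop :=
  ∃ p ∈ M, ∃ q ∈ M, p.1 < q.1 ∧ q.1 < p.2 ∧ p.2 < q.2 ∧ q.2 = p.2 + 1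

/-- A right nesting: arcs `(i1,j1)`, `(i2,j2)` with `i1<i2<j2<j1` and `j1 = j2+1`. -/
def HasRightNesting (M : Finset (ℕ × ℕ)) : Prop :=
  ∃ p ∈ M, ∃ q ∈ M, p.1 < q.1 ∧ q.1 < q.2 ∧ q.2 < p.2 ∧ p.2 = q.2 + 1

/-- `P(m,k)`: partial matchings of `[m]` with `k` arcs avoiding 2-right crossings
and right nestings. -/
def PMSet (m k : ℕ) : Set (Finset (ℕ × ℕ)) :=
  {M | IsMatching m M ∧ M.card = k ∧ ¬ Has2RightCrossing M ∧ ¬ HasRightNesting M}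

/-- `CT(n,k)`: partitions of `[n]` with `k` arcs avoiding right crossings. -/
def CTSet (n k : ℕ) : Set (Finset (ℕ × ℕ)) :=
  {P | IsPartitionDiagram n P ∧ P.card = k ∧ ¬ HasRightCrossing P}

/-- `lmax x i = max(x_0, …, x_{i-1})` (with value `0` when `i = 0`). -/
def lmax (x : ℕ → ℕ) (i : ℕ) : ℕ := (Finset.range i).sup x

/-- `x_i` is a left-to-right maximum (with `x_0` always counted as one). -/
def IsLTRMax (x : ℕ → ℕ) (i : ℕ) : Prop := i = 0 ∨ lmax x i < x i

/-- `S(n,k)`: sequences `x_0 … x_{n-1}` (extended by `0`) with `x_0 = 0`,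
`0 ≤ x_i ≤ max(x_0…x_{i-1})+1`, `x_i < x_{i-1}` whenever `x_i < max(x_0…x_{i-1})`,
and exactly `n-k` left-to-right maxima. -/
def SeqSet (n k : ℕ) : Set (ℕ → ℕ) :=
  {x | (∀ i, n ≤ i → x i = 0) ∧ x 0 = 0 ∧
       (∀ i, 1 ≤ i → i < n → x i ≤ lmax x i + 1) ∧
       (∀ i, 1 ≤ i → i < n → x i < lmax x i → x i < x (i - 1)) ∧
       ((Finset.range n).filter (fun i => i = 0 ∨ lmax x i < x i)).card = n - k}
namespace S6


/-- right endpoints -/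
def RE (A : Finset (ℕ × ℕ)) : Finset ℕ := A.image Prod.snd
/-- non-maximal right endpoints (the merged ones) -/
def mg (A : Finset (ℕ × ℕ)) : Finset ℕ := (RE A).filter (fun j => ∃ j' ∈ RE A, j < j')
def cnt (A : Finset (ℕ × ℕ)) (p : ℕ) : ℕ := ((mg A).filter (fun j => j < p)).card
def fm (A : Finset (ℕ × ℕ)) (p : ℕ) : ℕ := p - cnt A p
def gm (A : Finset (ℕ × ℕ)) (p : ℕ) : ℕ := p + cnt A p
def hm (A : Finset (ℕ × ℕ)) (p : ℕ) : ℕ := gm A p + (if p ∈ RE A then 1 else 0)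
def contract (A : Finset (ℕ × ℕ)) : Finset (ℕ × ℕ) :=
  A.image (fun q => (fm A q.1, fm A q.2))
def expand (A : Finset (ℕ × ℕ)) : Finset (ℕ × ℕ) :=
  A.image (fun q => (hm A q.1, gm A q.2))

lemma mem_RE {A : Finset (ℕ × ℕ)} {j : ℕ} : j ∈ RE A ↔ ∃ p ∈ A, p.2 = j := by
  simp [RE]

lemma mg_subset (A : Finset (ℕ × ℕ)) : mg A ⊆ RE A := filter_subset _ _

lemma cnt_le (A : Finset (ℕ × ℕ)) (p : ℕ) : cnt A p ≤ p := by
  have : (mg A).filter (fun j => j < p) ⊆ Finset.range p := by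
    intro j hj; simpa using (mem_filter.1 hj).2
  have h := card_le_card this
  simp at h
  exact h

lemma cnt_mono (A : Finset (ℕ × ℕ)) {p q : ℕ} (h : p ≤ q) : cnt A p ≤ cnt A q := by
  apply card_le_card
  intro j hj
  rw [mem_filter] at hj ⊢
  exact ⟨hj.1, lt_of_lt_of_le hj.2 h⟩

lemma cnt_succ (A : Finset (ℕ × ℕ)) (p : ℕ) :
    cnt A (p + 1) = cnt A p + (if p ∈ mg A then 1 else 0) := by
  unfold cnt
  have h1 : (mg A).filter (fun j => j < p + 1)
      = (mg A).filter (fun j => j < p ∨ j = p) := by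
    apply filter_congr; intro j _; constructor <;> (intro h; omega)
  rw [h1, filter_or, card_union_of_disjoint, Finset.filter_eq']
  · split <;> simp
  · rw [Finset.disjoint_filter]
    intro j _ hj hj'
    omega

lemma cnt_split (A : Finset (ℕ × ℕ)) {a b : ℕ} (h : a ≤ b) :
    cnt A b = cnt A a + ((mg A).filter (fun j => a ≤ j ∧ j < b)).card := by
  unfold cnt
  rw [← card_union_of_disjoint]
  · congr 1
    rw [← filter_or]
    apply filter_congr; intro j _; constructor <;> (intro h; omega)
  · rw [Finset.disjoint_filter]
    intro j _ hj hj'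
    omega

lemma window_le (A : Finset (ℕ × ℕ)) (a b : ℕ) :
    ((mg A).filter (fun j => a ≤ j ∧ j < b)).card ≤ b - a := by
  have : (mg A).filter (fun j => a ≤ j ∧ j < b) ⊆ Finset.Ico a b := by
    intro j hj; have := (mem_filter.1 hj).2; simp [this.1, this.2]
  simpa using card_le_card this

lemma cnt_window (A : Finset (ℕ × ℕ)) {a b : ℕ} (h : a ≤ b) :
    cnt A b ≤ cnt A a + (b - a) :=
  le_trans (le_of_eq (cnt_split A h)) (by have := window_le A a b; omega)

lemma fm_mono (A : Finset (ℕ × ℕ)) {a b : ℕ} (h : a ≤ b) : fm A a ≤ fm A b := by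
  have h1 := cnt_window A h
  have h2 := cnt_le A a
  unfold fm; omega

lemma fm_lt_imp (A : Finset (ℕ × ℕ)) {a b : ℕ} (h : fm A a < fm A b) : a < b := by
  by_contra hc
  exact absurd (fm_mono A (by omega : b ≤ a)) (by omega)

lemma gm_strict (A : Finset (ℕ × ℕ)) {a b : ℕ} (h : a < b) : gm A a < gm A b := by
  have := cnt_mono A (le_of_lt h); unfold gm; omega

lemma gm_mono' (A : Finset (ℕ × ℕ)) {a b : ℕ} (h : a ≤ b) : gm A a ≤ gm A b := by
  have := cnt_mono A h; unfold gm; omega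

lemma gm_lt_imp (A : Finset (ℕ × ℕ)) {a b : ℕ} (h : gm A a < gm A b) : a < b := by
  by_contra hc
  push_neg at hc
  have := cnt_mono A hc
  unfold gm at h
  omega

lemma gm_succ (A : Finset (ℕ × ℕ)) (p : ℕ) :
    gm A (p + 1) = gm A p + 1 + (if p ∈ mg A then 1 else 0) := by
  unfold gm; rw [cnt_succ]; ring

lemma fm_succ (A : Finset (ℕ × ℕ)) (p : ℕ) :
    fm A (p + 1) = fm A p + (if p ∈ mg A then 0 else 1) := by
  have h1 := cnt_succ A p
  have h2 := cnt_le A p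
  unfold fm; split at h1 <;> simp_all <;> omega

/-- the non-maximal elements of a nonempty finset number one less -/
lemma card_nonmax {s : Finset ℕ} (hs : s.Nonempty) :
    (s.filter (fun j => ∃ j' ∈ s, j < j')).card + 1 = s.card := by
  set pp : ℕ → Prop := fun j => ∃ j' ∈ s, j < j' with hpp
  have hmax : s.filter (fun j => ¬ pp j) = {s.max' hs} := by
    ext j
    simp only [hpp, mem_filter, mem_singleton, not_exists, not_and]
    constructor
    · rintro ⟨hj, h2⟩
      have h3 := s.le_max' j hj
      have h4 : ¬ (j < s.max' hs) := h2 (s.max' hs) (s.max'_mem hs)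
      omega
    · rintro rfl
      exact ⟨s.max'_mem hs, fun j' hj' hlt => absurd (s.le_max' j' hj') (by omega)⟩
  have hd : Disjoint (s.filter pp) (s.filter (fun j => ¬ pp j)) :=
    disjoint_filter_filter_not s s pp
  have hu : s.filter pp ∪ s.filter (fun j => ¬ pp j) = s := filter_union_filter_not_eq (p := pp) (s := s)
  have hc := card_union_of_disjoint hd
  rw [hu, hmax] at hc
  simp only [card_singleton] at hc
  have : #(filter pp s) = #(filter (fun j => ∃ j' ∈ s, j < j') s) := rfl
  omega




section Mside
variable {m k : ℕ} {M : Finset (ℕ × ℕ)}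

lemma RE_card_matching (hM : IsMatching m M) : (RE M).card = M.card := by
  apply card_image_of_injOn
  intro p hp q hq hpq
  by_contra h
  exact (hM.2 p hp q hq h).2.2.2 hpq

lemma RE_le (hM : IsMatching m M) {j : ℕ} (hj : j ∈ RE M) : j ≤ m := by
  rw [mem_RE] at hj
  obtain ⟨p, hp, rfl⟩ := hj
  exact (hM.1 p hp).2.2

lemma RE_pos {j : ℕ} (hM : IsMatching m M) (hj : j ∈ RE M) : 1 ≤ j := by
  rw [mem_RE] at hj
  obtain ⟨p, hp, rfl⟩ := hj
  have := (hM.1 p hp).1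
  have := (hM.1 p hp).2.1
  omega

lemma noLR (hM : IsMatching m M) {p : ℕ × ℕ} (hp : p ∈ M) : p.1 ∉ RE M := by
  rw [mem_RE]
  rintro ⟨q, hq, hq2⟩
  by_cases h : p = q
  · subst h
    have := (hM.1 p hp).2.1
    omega
  · exact (hM.2 p hp q hq h).2.1 hq2.symm

lemma adjRE (hM : IsMatching m M) (h2 : ¬ Has2RightCrossing M)
    (hRN : ¬ HasRightNesting M) {j : ℕ} (hj : j ∈ RE M) : j + 1 ∉ RE M := by
  rw [mem_RE] at hj ⊢
  rintro ⟨q, hq, hq2⟩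
  obtain ⟨p, hp, hp2⟩ := hj
  have hpq : p ≠ q := by
    intro h; subst h; omega
  obtain ⟨h11, h12, h21, h22⟩ := hM.2 p hp q hq hpq
  have hp1 := (hM.1 p hp).2.1
  have hq1 := (hM.1 q hq).2.1
  rcases lt_trichotomy p.1 q.1 with h | h | h
  · exact h2 ⟨p, hp, q, hq, h, by omega, by omega, by omega⟩
  · exact h11 h
  · exact hRN ⟨q, hq, p, hp, h, by omega, by omega, by omega⟩

lemma mg_nonadj (hadj : ∀ j ∈ RE M, j + 1 ∉ RE M) {a : ℕ} (ha : a ∈ mg M) :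
    a + 1 ∉ mg M :=
  fun h => hadj a (mg_subset _ ha) (mg_subset _ h)

lemma fm_strict (hadj : ∀ j ∈ RE M, j + 1 ∉ RE M) {a b : ℕ} (hab : a < b)
    (hnc : ¬ (a ∈ mg M ∧ b = a + 1)) : fm M a < fm M b := by
  rcases eq_or_lt_of_le (show a + 1 ≤ b by omega) with h | h
  · have ha : a ∉ mg M := fun hm => hnc ⟨hm, h.symm⟩
    rw [← h, fm_succ M a, if_neg ha]
    omega
  · have h2 : fm M a + 1 ≤ fm M (a + 2) := by
      by_cases hma : a ∈ mg M
      · have hma1 : a + 1 ∉ mg M := mg_nonadj hadj hma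
        have e1 := fm_succ M a
        have e2 := fm_succ M (a + 1)
        rw [if_pos hma] at e1
        rw [if_neg hma1] at e2
        rw [show a + 1 + 1 = a + 2 from rfl] at e2
        omega
      · have e1 := fm_succ M a
        rw [if_neg hma] at e1
        have := fm_mono M (show a + 1 ≤ a + 2 by omega)
        omega
    have := fm_mono M (show a + 2 ≤ b by omega)
    omega

lemma fm_collision (hadj : ∀ j ∈ RE M, j + 1 ∉ RE M) {a b : ℕ} (hab : a < b)
    (h : fm M a = fm M b) : a ∈ mg M ∧ b = a + 1 := by
  by_contra hc
  exact absurd (fm_strict hadj hab hc) (by omega)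

lemma fm_RE_strict (hadj : ∀ j ∈ RE M, j + 1 ∉ RE M) {a b : ℕ}
    (ha : a ∈ RE M) (hb : b ∈ RE M) (hab : a < b) : fm M a < fm M b := by
  apply fm_strict hadj hab
  rintro ⟨h1, rfl⟩
  exact hadj a ha hb

lemma fm_RE_inj (hadj : ∀ j ∈ RE M, j + 1 ∉ RE M) {a b : ℕ}
    (ha : a ∈ RE M) (hb : b ∈ RE M) (h : fm M a = fm M b) : a = b := by
  rcases lt_trichotomy a b with h1 | h1 | h1
  · exact absurd (fm_RE_strict hadj ha hb h1) (by omega)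
  · exact h1
  · exact absurd (fm_RE_strict hadj hb ha h1) (by omega)

theorem contract_mem {n k : ℕ} (hn : 1 ≤ n) {M : Finset (ℕ × ℕ)}
    (hM : M ∈ PMSet (n + k - 1) k) : contract M ∈ CTSet n k := by
  obtain ⟨hmat, hcard, h2rc, hrn⟩ := hM
  set m := n + k - 1 with hm
  have hadj : ∀ j ∈ RE M, j + 1 ∉ RE M := fun j hj => adjRE hmat h2rc hrn hj
  -- counting facts
  have hmgcard : M.Nonempty → (mg M).card + 1 = k := by
    intro hne
    have hREne : (RE M).Nonempty := hne.image _
    have := card_nonmax hREne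
    rw [RE_card_matching hmat, hcard] at this
    exact this
  have hcnt1 : ∀ p : ℕ, 1 ≤ p → cnt M p < p := by
    intro p hp
    have hsub : (mg M).filter (fun j => j < p) ⊆ Finset.Ico 1 p := by
      intro x hx
      rw [mem_filter] at hx
      exact mem_Ico.2 ⟨RE_pos hmat (mg_subset M hx.1), hx.2⟩
    have := card_le_card hsub
    rw [Nat.card_Ico] at this
    unfold cnt
    omega
  -- the upper bound for right endpoints
  have hub : ∀ j ∈ RE M, fm M j ≤ n := by
    intro j hj
    have hMne : M.Nonempty := by
      rw [mem_RE] at hj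
      obtain ⟨p, hp, _⟩ := hj
      exact ⟨p, hp⟩
    have hk1 := hmgcard hMne
    have hjm := RE_le hmat hj
    -- tail count
    have htail := card_filter_add_card_filter_not
      (s := mg M) (p := fun x => x < j)
    have hsub : (mg M).filter (fun x => ¬ x < j) ⊆ Finset.Ico j m := by
      intro x hx
      rw [mem_filter] at hx
      have hxmg := hx.1
      have hxm : x < m := by
        have hx' := mem_filter.1 hxmg
        obtain ⟨x', hx'RE, hxx'⟩ := hx'.2
        have := RE_le hmat hx'RE
        omega
      exact mem_Ico.2 ⟨by omega, hxm⟩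
    have hle := card_le_card hsub
    rw [Nat.card_Ico] at hle
    have hc := cnt_le M j
    unfold fm cnt
    unfold cnt at hc
    omega
  constructor
  · -- partition diagram
    constructor
    · rintro p' hp'
      rw [contract, mem_image] at hp'
      obtain ⟨p, hp, rfl⟩ := hp'
      obtain ⟨ha, hb, hc⟩ := hmat.1 p hp
      have hp1 : fm M p.1 < fm M p.2 := by
        apply fm_strict hadj hb
        rintro ⟨h1, -⟩
        exact noLR hmat hp (mg_subset M h1)
      have hub2 : fm M p.2 ≤ n := hub p.2 (mem_RE.2 ⟨p, hp, rfl⟩)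
      have := hcnt1 p.1 ha
      refine ⟨?_, hp1, hub2⟩
      unfold fm
      omega
    · rintro p' hp' q' hq' hpq'
      rw [contract, mem_image] at hp' hq'
      obtain ⟨p, hp, rfl⟩ := hp'
      obtain ⟨q, hq, rfl⟩ := hq'
      have hpq : p ≠ q := by rintro rfl; exact hpq' rfl
      obtain ⟨h11, h12, h21, h22⟩ := hmat.2 p hp q hq hpq
      constructor
      · simp only [ne_eq]
        intro heq
        rcases lt_trichotomy p.1 q.1 with h | h | h
        · exact noLR hmat hp (mg_subset M (fm_collision hadj h heq).1)
        · exact h11 h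
        · exact noLR hmat hq (mg_subset M (fm_collision hadj h heq.symm).1)
      · simp only [ne_eq]
        intro heq
        exact h22 (fm_RE_inj hadj (mem_RE.2 ⟨p, hp, rfl⟩) (mem_RE.2 ⟨q, hq, rfl⟩) heq)
  refine ⟨?_, ?_⟩
  · -- card
    rw [contract, card_image_of_injOn, hcard]
    intro p hp q hq heq
    simp only [Prod.mk.injEq] at heq
    have h2 : p.2 = q.2 :=
      fm_RE_inj hadj (mem_RE.2 ⟨p, hp, rfl⟩) (mem_RE.2 ⟨q, hq, rfl⟩) heq.2
    by_contra hne
    exact (hmat.2 p hp q hq hne).2.2.2 h2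
  · -- no right crossing
    rintro ⟨p', hp', q', hq', h1, h2, h3, h4⟩
    rw [contract, mem_image] at hp' hq'
    obtain ⟨p, hp, rfl⟩ := hp'
    obtain ⟨q, hq, rfl⟩ := hq'
    simp only at h1 h2 h3 h4
    have hi : p.1 < q.1 := fm_lt_imp M h1
    have hij : q.1 < p.2 := fm_lt_imp M h2
    have hjj : p.2 < q.2 := fm_lt_imp M h3
    have hj1RE : p.2 ∈ RE M := mem_RE.2 ⟨p, hp, rfl⟩
    have hj2RE : q.2 ∈ RE M := mem_RE.2 ⟨q, hq, rfl⟩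
    have hj1mg : p.2 ∈ mg M := mem_filter.2 ⟨hj1RE, ⟨q.2, hj2RE, hjj⟩⟩
    have hne2 : q.2 ≠ p.2 + 1 := by
      intro h
      exact hadj p.2 hj1RE (h ▸ hj2RE)
    rcases eq_or_lt_of_le (show p.2 + 2 ≤ q.2 by omega) with hcase | hcase
    · exact h2rc ⟨p, hp, q, hq, hi, hij, hjj, by omega⟩
    · -- q.2 ≥ p.2 + 3
      have hsplit := cnt_split M (le_of_lt hjj)
      set T := (mg M).filter (fun x => p.2 ≤ x ∧ x < q.2) with hT
      have hc1 := hcnt1 p.2 (RE_pos hmat hj1RE)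
      have hc2 := cnt_le M q.2
      have h4' : fm M q.2 = fm M p.2 + 1 := h4
      have hTcard : T.card = q.2 - p.2 - 1 := by
        unfold fm at h4'
        omega
      have hj2m1 : q.2 - 1 ∉ mg M := by
        intro hx
        have := hadj (q.2 - 1) (mg_subset M hx)
        rw [show q.2 - 1 + 1 = q.2 by omega] at this
        exact this hj2RE
      have hTsub : T ⊆ (Finset.Ico p.2 q.2).erase (q.2 - 1) := by
        intro x hx
        rw [hT, mem_filter] at hx
        refine mem_erase.2 ⟨?_, mem_Ico.2 ⟨hx.2.1, hx.2.2⟩⟩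
        intro heq
        exact hj2m1 (heq ▸ hx.1)
      have hTeq : T = (Finset.Ico p.2 q.2).erase (q.2 - 1) := by
        apply eq_of_subset_of_card_le hTsub
        rw [card_erase_of_mem (mem_Ico.2 ⟨by omega, by omega⟩), Nat.card_Ico]
        omega
      have hmem : p.2 + 1 ∈ T := by
        rw [hTeq]
        exact mem_erase.2 ⟨by omega, mem_Ico.2 ⟨by omega, by omega⟩⟩
      rw [hT, mem_filter] at hmem
      exact hadj p.2 hj1RE (mg_subset M hmem.1)

end Mside

section Pside
variable {n k : ℕ} {P : Finset (ℕ × ℕ)}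

lemma RE_card_part (hP : IsPartitionDiagram n P) : (RE P).card = P.card := by
  apply card_image_of_injOn
  intro p hp q hq hpq
  by_contra h
  exact (hP.2 p hp q hq h).2 hpq

lemma LR_mg (hP : IsPartitionDiagram n P) {p : ℕ × ℕ} (hp : p ∈ P)
    (h : p.1 ∈ RE P) : p.1 ∈ mg P :=
  mem_filter.2 ⟨h, p.2, mem_RE.2 ⟨p, hp, rfl⟩, (hP.1 p hp).2.1⟩

lemma gm_inj (A : Finset (ℕ × ℕ)) {a b : ℕ} (h : gm A a = gm A b) : a = b := by
  rcases lt_trichotomy a b with h1 | h1 | h1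
  · exact absurd (gm_strict A h1) (by omega)
  · exact h1
  · exact absurd (gm_strict A h1) (by omega)

lemma hm_mono (A : Finset (ℕ × ℕ)) {a b : ℕ} (h : a ≤ b) : hm A a ≤ hm A b := by
  rcases eq_or_lt_of_le h with rfl | h1
  · exact le_refl _
  · have h2 := gm_succ A a
    have h3 := gm_mono' A (show a + 1 ≤ b from h1)
    unfold hm
    have e1 : (if a ∈ RE A then 1 else 0) ≤ 1 := by split <;> omega
    have e2 : (0:ℕ) ≤ (if b ∈ RE A then 1 else 0) := by omega
    omega

lemma hm_lt_imp (A : Finset (ℕ × ℕ)) {a b : ℕ} (h : hm A a < hm A b) : a < b := by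
  by_contra hc
  exact absurd (hm_mono A (by omega : b ≤ a)) (by omega)

lemma gm_le_hm (A : Finset (ℕ × ℕ)) (a : ℕ) : gm A a ≤ hm A a := by
  unfold hm; omega

/-- if `a ∈ RE → a ∈ mg`, then `hm a < gm b` for `a < b`. -/
lemma hm_sep (A : Finset (ℕ × ℕ)) {a b : ℕ} (hmg : a ∈ RE A → a ∈ mg A)
    (hab : a < b) : hm A a < gm A b := by
  have h2 := gm_succ A a
  have h3 := gm_mono' A (show a + 1 ≤ b from hab)
  unfold hm
  by_cases h : a ∈ RE A
  · rw [if_pos h]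
    rw [if_pos (hmg h)] at h2
    omega
  · rw [if_neg h]
    omega

lemma hm_ne_gm (A : Finset (ℕ × ℕ)) {a b : ℕ} (hmg : a ∈ RE A → a ∈ mg A)
    (hne : a ∉ RE A → a ≠ b) : hm A a ≠ gm A b := by
  by_cases h : a ∈ RE A
  · intro heq
    rcases le_or_gt b a with h1 | h1
    · have := gm_mono' A h1
      unfold hm at heq
      rw [if_pos h] at heq
      have h2 := gm_succ A a
      rw [if_pos (hmg h)] at h2
      rcases eq_or_lt_of_le h1 with rfl | h1'
      · omega
      · have := gm_strict A h1'
        omega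
    · have h2 := gm_succ A a
      rw [if_pos (hmg h)] at h2
      have h3 := gm_mono' A (show a + 1 ≤ b from h1)
      unfold hm at heq
      rw [if_pos h] at heq
      omega
  · intro heq
    unfold hm at heq
    rw [if_neg h] at heq
    simp only [add_zero] at heq
    exact hne h (gm_inj A heq)

theorem expand_mem {n k : ℕ} (hn : 1 ≤ n) (hk : k ≤ n - 1) {P : Finset (ℕ × ℕ)}
    (hP : P ∈ CTSet n k) : expand P ∈ PMSet (n + k - 1) k := by
  obtain ⟨hpart, hcard, hrc⟩ := hP
  have hmgcard : P.Nonempty → (mg P).card + 1 = k := by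
    intro hne
    have hREne : (RE P).Nonempty := hne.image _
    have := card_nonmax hREne
    rw [RE_card_part hpart, hcard] at this
    exact this
  have hmg : ∀ p ∈ P, p.1 ∈ RE P → p.1 ∈ mg P := fun p hp => LR_mg hpart hp
  refine ⟨⟨?_, ?_⟩, ?_, ?_, ?_⟩
  · -- bounds
    rintro p' hp'
    rw [expand, mem_image] at hp'
    obtain ⟨p, hp, rfl⟩ := hp'
    obtain ⟨ha, hb, hc⟩ := hpart.1 p hp
    have hkpos : 1 ≤ k := by
      rw [← hcard]
      exact card_pos.2 ⟨p, hp⟩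
    refine ⟨?_, hm_sep P (hmg p hp) hb, ?_⟩
    · have := gm_le_hm P p.1
      unfold gm at this ⊢
      simp only
      omega
    · simp only
      have hcnt : cnt P p.2 ≤ (mg P).card := card_le_card (filter_subset _ _)
      have hmgc := hmgcard ⟨p, hp⟩
      unfold gm
      omega
  · -- matching distinctness
    rintro p' hp' q' hq' hpq'
    rw [expand, mem_image] at hp' hq'
    obtain ⟨p, hp, rfl⟩ := hp'
    obtain ⟨q, hq, rfl⟩ := hq'
    have hpq : p ≠ q := by rintro rfl; exact hpq' rfl
    obtain ⟨h1, h2⟩ := hpart.2 p hp q hq hpq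
    refine ⟨?_, ?_, ?_, ?_⟩
    · -- hm p.1 ≠ hm q.1
      simp only [ne_eq]
      intro heq
      rcases lt_trichotomy p.1 q.1 with h | h | h
      · have := hm_sep P (hmg p hp) h
        have := gm_le_hm P q.1
        omega
      · exact h1 h
      · have := hm_sep P (hmg q hq) h
        have := gm_le_hm P p.1
        omega
    · -- hm p.1 ≠ gm q.2
      apply hm_ne_gm P (hmg p hp)
      intro hnot heq
      exact hnot (heq ▸ mem_RE.2 ⟨q, hq, rfl⟩)
    · -- gm p.2 ≠ hm q.1
      simp only [ne_eq]
      intro heq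
      apply hm_ne_gm P (hmg q hq) ?_ heq.symm
      intro hnot heq2
      exact hnot (heq2 ▸ mem_RE.2 ⟨p, hp, rfl⟩)
    · -- gm p.2 ≠ gm q.2
      simp only [ne_eq]
      intro heq
      exact h2 (gm_inj P heq)
  · -- card
    rw [expand, card_image_of_injOn, hcard]
    intro p hp q hq heq
    simp only [Prod.mk.injEq] at heq
    have h2 : p.2 = q.2 := gm_inj P heq.2
    by_contra hne
    exact (hpart.2 p hp q hq hne).2 h2
  · -- no 2-right crossing
    rintro ⟨p', hp', q', hq', h1, h2, h3, h4⟩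
    rw [expand, mem_image] at hp' hq'
    obtain ⟨p, hp, rfl⟩ := hp'
    obtain ⟨q, hq, rfl⟩ := hq'
    simp only at h1 h2 h3 h4
    have hjj : p.2 < q.2 := gm_lt_imp P h3
    have hj1mg : p.2 ∈ mg P :=
      mem_filter.2 ⟨mem_RE.2 ⟨p, hp, rfl⟩, q.2, mem_RE.2 ⟨q, hq, rfl⟩, hjj⟩
    have h5 := gm_succ P p.2
    rw [if_pos hj1mg] at h5
    have h6 := gm_mono' P (show p.2 + 1 ≤ q.2 from hjj)
    have h7 : gm P q.2 = gm P (p.2 + 1) := by omega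
    have h8 : q.2 = p.2 + 1 := gm_inj P h7
    have hi : p.1 < q.1 := hm_lt_imp P h1
    have hij : q.1 < p.2 := by
      have := gm_le_hm P q.1
      exact gm_lt_imp P (by omega)
    exact hrc ⟨p, hp, q, hq, hi, hij, hjj, h8⟩
  · -- no right nesting
    rintro ⟨p', hp', q', hq', h1, h2, h3, h4⟩
    rw [expand, mem_image] at hp' hq'
    obtain ⟨p, hp, rfl⟩ := hp'
    obtain ⟨q, hq, rfl⟩ := hq'
    simp only at h1 h2 h3 h4
    have hjj : q.2 < p.2 := gm_lt_imp P h3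
    have hj2mg : q.2 ∈ mg P :=
      mem_filter.2 ⟨mem_RE.2 ⟨q, hq, rfl⟩, p.2, mem_RE.2 ⟨p, hp, rfl⟩, hjj⟩
    have h5 := gm_succ P q.2
    rw [if_pos hj2mg] at h5
    have h6 := gm_mono' P (show q.2 + 1 ≤ p.2 from hjj)
    omega

end Pside

section Round
variable {M P : Finset (ℕ × ℕ)}

lemma RE_contract : RE (contract M) = (RE M).image (fm M) := by
  simp only [RE, contract, image_image]
  rfl

lemma RE_expand : RE (expand P) = (RE P).image (gm P) := by
  simp only [RE, expand, image_image]
  rfl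

lemma mg_contract (hadj : ∀ j ∈ RE M, j + 1 ∉ RE M) :
    mg (contract M) = (mg M).image (fm M) := by
  ext x
  simp only [mg, mem_filter, RE_contract, mem_image]
  constructor
  · rintro ⟨⟨j, hj, rfl⟩, x', ⟨j', hj', rfl⟩, hlt⟩
    exact ⟨j, ⟨hj, j', hj', fm_lt_imp M hlt⟩, rfl⟩
  · rintro ⟨j, ⟨hj, j', hj', hlt⟩, rfl⟩
    exact ⟨⟨j, hj, rfl⟩, fm M j', ⟨j', hj', rfl⟩, fm_RE_strict hadj hj hj' hlt⟩

lemma mg_expand : mg (expand P) = (mg P).image (gm P) := by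
  ext x
  simp only [mg, mem_filter, RE_expand, mem_image]
  constructor
  · rintro ⟨⟨j, hj, rfl⟩, x', ⟨j', hj', rfl⟩, hlt⟩
    exact ⟨j, ⟨hj, j', hj', gm_lt_imp P hlt⟩, rfl⟩
  · rintro ⟨j, ⟨hj, j', hj', hlt⟩, rfl⟩
    exact ⟨⟨j, hj, rfl⟩, gm P j', ⟨j', hj', rfl⟩, gm_strict P hlt⟩

lemma card_filter_image {s : Finset ℕ} {F : ℕ → ℕ} (hinj : Set.InjOn F s) (x : ℕ) :
    ((s.image F).filter (fun y => y < x)).card = (s.filter (fun j => F j < x)).card := by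
  rw [Finset.filter_image]
  exact card_image_of_injOn (hinj.mono (fun y hy => (mem_filter.1 hy).1))

lemma cnt_contract (hadj : ∀ j ∈ RE M, j + 1 ∉ RE M) (x : ℕ) :
    cnt (contract M) x = ((mg M).filter (fun j => fm M j < x)).card := by
  unfold cnt
  rw [mg_contract hadj]
  apply card_filter_image
  intro a ha b hb hab
  exact fm_RE_inj hadj (mg_subset M ha) (mg_subset M hb) hab

lemma cnt_expand (x : ℕ) :
    cnt (expand P) x = ((mg P).filter (fun j => gm P j < x)).card := by
  unfold cnt
  rw [mg_expand]
  apply card_filter_image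
  intro a _ b _ hab
  exact gm_inj P hab

/-- key: contracting then re-inserting returns right endpoints -/
lemma gm_contract_fm (hadj : ∀ j ∈ RE M, j + 1 ∉ RE M) {j : ℕ} (hj : j ∈ RE M) :
    gm (contract M) (fm M j) = j := by
  have h1 : cnt (contract M) (fm M j) = cnt M j := by
    rw [cnt_contract hadj]
    unfold cnt
    congr 1
    apply filter_congr
    intro j' hj'
    have hj'RE := mg_subset M hj'
    constructor
    · intro h
      exact fm_lt_imp M h
    · intro h
      exact fm_RE_strict hadj hj'RE hj h
  unfold gm
  rw [h1]
  have := cnt_le M j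
  unfold fm
  omega

lemma fm_expand_gm (p : ℕ) : fm (expand P) (gm P p) = p := by
  have h1 : cnt (expand P) (gm P p) = cnt P p := by
    rw [cnt_expand]
    unfold cnt
    congr 1
    apply filter_congr
    intro j' hj'
    constructor
    · intro h
      exact gm_lt_imp P h
    · intro h
      exact gm_strict P h
  unfold fm
  rw [h1]
  unfold gm
  omega

/-- membership characterization after contraction -/
lemma fm_mem_RE_contract (hadj : ∀ j ∈ RE M, j + 1 ∉ RE M) {i : ℕ}
    (hi : i ∉ RE M) (h1 : 1 ≤ i) :
    fm M i ∈ RE (contract M) ↔ (i - 1) ∈ mg M := by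
  rw [RE_contract, mem_image]
  constructor
  · rintro ⟨j, hj, heq⟩
    have hij : i ≠ j := fun h => hi (h ▸ hj)
    rcases lt_trichotomy i j with h | h | h
    · exact absurd (mg_subset M (fm_collision hadj h heq.symm).1) hi
    · exact absurd h hij
    · obtain ⟨hjm, hji⟩ := fm_collision hadj h heq
      rw [show i - 1 = j by omega]
      exact hjm
  · intro hmem
    refine ⟨i - 1, mg_subset M hmem, ?_⟩
    have := fm_succ M (i - 1)
    rw [if_pos hmem, show i - 1 + 1 = i by omega] at this
    omega

lemma hm_contract_fm (hadj : ∀ j ∈ RE M, j + 1 ∉ RE M) {i : ℕ}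
    (hi : i ∉ RE M) (h1 : 1 ≤ i) : hm (contract M) (fm M i) = i := by
  by_cases hc : (i - 1) ∈ mg M
  · -- fm i = fm (i-1), a right endpoint image
    have hfm : fm M i = fm M (i - 1) := by
      have := fm_succ M (i - 1)
      rw [if_pos hc, show i - 1 + 1 = i by omega] at this
      omega
    have hRE : fm M i ∈ RE (contract M) := (fm_mem_RE_contract hadj hi h1).2 hc
    unfold hm
    rw [if_pos hRE, hfm, gm_contract_fm hadj (mg_subset M hc)]
    omega
  · have hRE : fm M i ∉ RE (contract M) := fun h => hc ((fm_mem_RE_contract hadj hi h1).1 h)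
    unfold hm
    rw [if_neg hRE]
    simp only [add_zero]
    have h2 : cnt (contract M) (fm M i) = cnt M i := by
      rw [cnt_contract hadj]
      unfold cnt
      congr 1
      apply filter_congr
      intro j' hj'
      have hj'RE := mg_subset M hj'
      constructor
      · intro h
        exact fm_lt_imp M h
      · intro h
        apply fm_strict hadj h
        rintro ⟨-, rfl⟩
        exact hc (by simpa using hj')
    unfold gm
    rw [h2]
    have := cnt_le M i
    unfold fm
    omega

lemma fm_expand_hm {i : ℕ} (hmg : i ∈ RE P → i ∈ mg P) :
    fm (expand P) (hm P i) = i := by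
  by_cases h : i ∈ RE P
  · have himg := hmg h
    have hhm : hm P i = gm P i + 1 := by unfold hm; rw [if_pos h]
    have h2 : cnt (expand P) (gm P i + 1) = cnt P i + 1 := by
      rw [cnt_expand]
      have : (mg P).filter (fun j => gm P j < gm P i + 1)
          = (mg P).filter (fun j => j < i + 1) := by
        apply filter_congr
        intro j' hj'
        constructor
        · intro hlt
          have : ¬ (gm P i < gm P j') := by omega
          have h3 : ¬ (i < j') := fun hij => this (gm_strict P hij)
          omega
        · intro hlt
          have h3 : j' ≤ i := by omega
          have := gm_mono' P h3
          omega
      rw [this]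
      have := cnt_succ P i
      rw [if_pos himg] at this
      unfold cnt at this ⊢
      omega
    unfold fm
    rw [hhm, h2]
    unfold gm
    omega
  · have hhm : hm P i = gm P i := by unfold hm; rw [if_neg h]; omega
    rw [hhm, fm_expand_gm]

theorem expand_contract {m : ℕ} (hmat : IsMatching m M)
    (h2rc : ¬ Has2RightCrossing M) (hrn : ¬ HasRightNesting M) :
    expand (contract M) = M := by
  have hadj : ∀ j ∈ RE M, j + 1 ∉ RE M := fun j hj => adjRE hmat h2rc hrn hj
  show (M.image (fun q => (fm M q.1, fm M q.2))).image
      (fun r => (hm (contract M) r.1, gm (contract M) r.2)) = M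
  rw [image_image]
  have he : ∀ p ∈ M, ((fun r => (hm (contract M) r.1, gm (contract M) r.2)) ∘
      (fun q => (fm M q.1, fm M q.2))) p = p := by
    rintro ⟨p1, p2⟩ hp
    have h1 := (hmat.1 ⟨p1, p2⟩ hp).1
    have hre : p2 ∈ RE M := mem_RE.2 ⟨⟨p1, p2⟩, hp, rfl⟩
    have hnl : p1 ∉ RE M := noLR hmat hp
    simp only [Function.comp, Prod.mk.injEq]
    exact ⟨hm_contract_fm hadj hnl h1, gm_contract_fm hadj hre⟩
  calc M.image _ = M.image id := Finset.image_congr he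
    _ = M := Finset.image_id

theorem contract_expand {n : ℕ} (hpart : IsPartitionDiagram n P) :
    contract (expand P) = P := by
  show (P.image (fun q => (hm P q.1, gm P q.2))).image
      (fun r => (fm (expand P) r.1, fm (expand P) r.2)) = P
  rw [image_image]
  have he : ∀ p ∈ P, ((fun r => (fm (expand P) r.1, fm (expand P) r.2)) ∘
      (fun q => (hm P q.1, gm P q.2))) p = p := by
    rintro ⟨p1, p2⟩ hp
    simp only [Function.comp, Prod.mk.injEq]
    exact ⟨fm_expand_hm (LR_mg hpart hp), fm_expand_gm p2⟩
  calc P.image _ = P.image id := Finset.image_congr he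
    _ = P := Finset.image_id

end Round
end S6


/-- There is a bijection between `P(n+k-1,k)` and `CT(n,k)`; in particular the
two sets have the same cardinality. -/
theorem stmt6 (n k : ℕ) (hn : 1 ≤ n) (hk : k ≤ n - 1) :
    Nonempty (↥(PMSet (n + k - 1) k) ≃ ↥(CTSet n k)) ∧
    (PMSet (n + k - 1) k).ncard = (CTSet n k).ncard := by
  have e : ↥(PMSet (n + k - 1) k) ≃ ↥(CTSet n k) :=
    { toFun := fun x => ⟨S6.contract x.1, S6.contract_mem hn x.2⟩
      invFun := fun y => ⟨S6.expand y.1, S6.expand_mem hn hk y.2⟩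
      left_inv := fun x => Subtype.ext (S6.expand_contract x.2.1 x.2.2.2.1 x.2.2.2.2)
      right_inv := fun y => Subtype.ext (S6.contract_expand y.2.1) }
  refine ⟨⟨e⟩, ?_⟩
  rw [← Nat.card_coe_set_eq, ← Nat.card_coe_set_eq]
  exact Nat.card_congr e
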